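/- Sphere packing bound for constant-dimension LOBC codes: with γ: M_1 × M_2 → C ⊆ P(F_q^m, l)^n a bijective encoder with separation vector (s_1,s_2), s_1 < s_2, and 0 < l < m, one has |M_2| < 4^n · q^{n·l(m−l)} / T_{n,l}(s_1, |M_1|, ⌊(s_2−1)/2⌋). -/

import Mathlib

open Module Finset

/-- Subspace distance `d_S(U,W) = dim(U+W) - dim(U∩W)`. -/
noncomputable def dS {K V : Type*} [Field K] [AddCommGroup V] [Module K V]
    (U W : Submodule K V) : ℕ :=
  finrank K ↥(U ⊔ W) - finrank K ↥(U ⊓ W)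

/-- Extended subspace distance on `n`-tuples of subspaces. -/
noncomputable def dSn {K V : Type*} [Field K] [AddCommGroup V] [Module K V] {n : ℕ}
    (X Y : Fin n → Submodule K V) : ℕ :=
  ∑ i, dS (X i) (Y i)

/-- Ball of radius `r` around a tuple of subspaces. -/
def ballS {K V : Type*} [Field K] [AddCommGroup V] [Module K V] {n : ℕ}
    (r : ℕ) (C : Fin n → Submodule K V) : Set (Fin n → Submodule K V) :=
  {U | dSn U C ≤ r}

/-- `r`-neighborhood of a set of tuples of subspaces. -/
def nbhdS {K V : Type*} [Field K] [AddCommGroup V] [Module K V] {n : ℕ}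
    (r : ℕ) (S : Set (Fin n → Submodule K V)) : Set (Fin n → Submodule K V) :=
  ⋃ C ∈ S, ballS r C

/-- Gaussian binomial coefficient `binom(a,b)_q`, realized as the number of
`b`-dimensional subspaces of `K^a` where `|K| = q`. -/
noncomputable def gaussCard (K : Type*) [Field K] (a b : ℕ) : ℕ :=
  Nat.card {W : Submodule K (Fin a → K) // finrank K ↥W = b}

/-- `r`-neighborhood taken inside the set of constant-dimension (`l`) tuples. -/
def nbhdG {K : Type*} [Field K] {m n : ℕ} (l r : ℕ)
    (S : Set (Fin n → Submodule K (Fin m → K))) : Set (Fin n → Submodule K (Fin m → K)) :=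
  {U | (∀ i, finrank K ↥(U i) = l) ∧ ∃ C ∈ S, dSn U C ≤ r}

/-- `T_{n,l}(d,N,r)`: minimum cardinality of an `r`-neighborhood (within
`P(F_q^m,l)^n`) of a constant-dimension code of size `N` and minimum distance `≥ d`. -/
noncomputable def Tnl (K : Type*) [Field K] (m n l d N r : ℕ) : ℕ :=
  sInf {t | ∃ S : Set (Fin n → Submodule K (Fin m → K)),
    (∀ X ∈ S, ∀ i, finrank K ↥(X i) = l) ∧ Nat.card ↥S = N ∧
    (∀ X ∈ S, ∀ Y ∈ S, X ≠ Y → d ≤ dSn X Y) ∧ t = Nat.card ↥(nbhdG l r S)}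

/-! ### Auxiliary lemmas -/

section Metric

set_option linter.unusedSectionVars false

variable {K V : Type*} [Field K] [AddCommGroup V] [Module K V] [FiniteDimensional K V]

lemma dS_self (U : Submodule K V) : dS U U = 0 := by
  unfold dS; rw [sup_idem, inf_idem, Nat.sub_self]

lemma dS_comm (U W : Submodule K V) : dS U W = dS W U := by
  unfold dS; rw [sup_comm, inf_comm]

lemma dS_pos {U W : Submodule K V} (h : U ≠ W) : 0 < dS U W := by
  have hlt : U ⊓ W < U ⊔ W := by
    refine lt_of_le_of_ne inf_le_sup ?_
    intro he
    apply h
    have hU : U ≤ U ⊓ W := he ▸ le_sup_left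
    have hW : W ≤ U ⊓ W := he ▸ le_sup_right
    exact le_antisymm (hU.trans inf_le_right) (hW.trans inf_le_left)
  have h1 := Submodule.finrank_lt_finrank_of_lt hlt
  simp only [dS]; omega

lemma dS_triangle (U V' W : Submodule K V) : dS U W ≤ dS U V' + dS V' W := by
  have e1 : finrank K ↥(U ⊔ W) + finrank K ↥(U ⊓ W) = finrank K ↥U + finrank K ↥W :=
    Submodule.finrank_sup_add_finrank_inf_eq U W
  have e2 := Submodule.finrank_sup_add_finrank_inf_eq U V'
  have e3 := Submodule.finrank_sup_add_finrank_inf_eq V' W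
  have e4 := Submodule.finrank_sup_add_finrank_inf_eq (U ⊔ V') (V' ⊔ W)
  have e5 := Submodule.finrank_sup_add_finrank_inf_eq (U ⊓ V') (V' ⊓ W)
  have k1 : finrank K ↥(U ⊔ W) ≤ finrank K ↥((U ⊔ V') ⊔ (V' ⊔ W)) :=
    Submodule.finrank_mono
      (sup_le (le_sup_of_le_left le_sup_left) (le_sup_of_le_right le_sup_right))
  have k2 : finrank K ↥V' ≤ finrank K ↥((U ⊔ V') ⊓ (V' ⊔ W)) :=
    Submodule.finrank_mono (le_inf le_sup_right le_sup_left)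
  have k3 : finrank K ↥((U ⊓ V') ⊔ (V' ⊓ W)) ≤ finrank K ↥V' :=
    Submodule.finrank_mono (sup_le inf_le_right inf_le_left)
  have k4 : finrank K ↥((U ⊓ V') ⊓ (V' ⊓ W)) ≤ finrank K ↥(U ⊓ W) :=
    Submodule.finrank_mono
      (le_inf (inf_le_left.trans inf_le_left) (inf_le_right.trans inf_le_right))
  have m1 : finrank K ↥(U ⊓ W) ≤ finrank K ↥(U ⊔ W) :=
    Submodule.finrank_mono (le_trans inf_le_left le_sup_left)
  have m2 : finrank K ↥(U ⊓ V') ≤ finrank K ↥(U ⊔ V') :=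
    Submodule.finrank_mono (le_trans inf_le_left le_sup_left)
  have m3 : finrank K ↥(V' ⊓ W) ≤ finrank K ↥(V' ⊔ W) :=
    Submodule.finrank_mono (le_trans inf_le_left le_sup_left)
  simp only [dS]
  omega

variable {n : ℕ}

lemma dSn_self (X : Fin n → Submodule K V) : dSn X X = 0 := by
  simp [dSn, dS_self]

lemma dSn_comm (X Y : Fin n → Submodule K V) : dSn X Y = dSn Y X := by
  unfold dSn; exact Finset.sum_congr rfl fun i _ => dS_comm _ _

lemma dSn_triangle (X Y Z : Fin n → Submodule K V) : dSn X Z ≤ dSn X Y + dSn Y Z := by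
  unfold dSn
  rw [← Finset.sum_add_distrib]
  exact Finset.sum_le_sum fun i _ => dS_triangle _ _ _

lemma dSn_pos {X Y : Fin n → Submodule K V} (h : X ≠ Y) : 0 < dSn X Y := by
  have : ∃ i, X i ≠ Y i := by
    by_contra hc
    push_neg at hc
    exact h (funext hc)
  obtain ⟨i, hi⟩ := this
  calc 0 < dS (X i) (Y i) := dS_pos hi
    _ ≤ ∑ j, dS (X j) (Y j) :=
        Finset.single_le_sum (f := fun j => dS (X j) (Y j))
          (fun j _ => Nat.zero_le _) (Finset.mem_univ i)
    _ = dSn X Y := rfl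

end Metric

section Counting

lemma grass_count {K V : Type*} [Field K] [AddCommGroup V] [Module K V] [Fintype K] [Finite V]
    (l : ℕ) :
    Nat.card {s : Fin l → V // LinearIndependent K s} =
      Nat.card {W : Submodule K V // finrank K ↥W = l} *
        ∏ i : Fin l, (Fintype.card K ^ l - Fintype.card K ^ i.val) := by
  classical
  have hbij : Function.Bijective
      (fun p : (Σ W : {W : Submodule K V // finrank K ↥W = l},
          {s : Fin l → ↥W.1 // LinearIndependent K s}) =>
        (⟨fun i => ((p.2.1 i : ↥p.1.1) : V),
          p.2.2.map' p.1.1.subtype (Submodule.ker_subtype _)⟩ :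
          {s : Fin l → V // LinearIndependent K s})) := by
    constructor
    · rintro ⟨⟨W, hW⟩, ⟨t, ht⟩⟩ ⟨⟨W', hW'⟩, ⟨t', ht'⟩⟩ h
      simp only [Subtype.mk.injEq] at h
      have hspan : ∀ (W : Submodule K V) (hW : finrank K ↥W = l)
          (t : Fin l → ↥W) (ht : LinearIndependent K t),
          Submodule.span K (Set.range fun i => ((t i : ↥W) : V)) = W := by
        intro W hW t ht
        have htop : Submodule.span K (Set.range t) = ⊤ := by
          apply LinearIndependent.span_eq_top_of_card_eq_finrank' ht
          simp [hW]
        have : (fun i => ((t i : ↥W) : V)) = W.subtype ∘ t := rfl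
        rw [this, Set.range_comp, Submodule.span_image, htop, Submodule.map_subtype_top]
      have hWW : W = W' := by
        rw [← hspan W hW t ht, ← hspan W' hW' t' ht']
        exact congrArg (fun f => Submodule.span K (Set.range f)) (congrArg Subtype.val h)
      subst hWW
      have htt : t = t' := by
        funext i
        exact Subtype.ext (congrFun (congrArg Subtype.val h) i)
      subst htt
      rfl
    · rintro ⟨s, hs⟩
      have hfr : finrank K ↥(Submodule.span K (Set.range s)) = l := by
        rw [finrank_span_eq_card hs, Fintype.card_fin]
      refine ⟨⟨⟨Submodule.span K (Set.range s), hfr⟩,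
        ⟨fun i => ⟨s i, Submodule.subset_span (Set.mem_range_self i)⟩, ?_⟩⟩, rfl⟩
      exact LinearIndependent.of_comp (Submodule.span K (Set.range s)).subtype hs
  letI : Fintype {W : Submodule K V // finrank K ↥W = l} := Fintype.ofFinite _
  letI : ∀ W : {W : Submodule K V // finrank K ↥W = l},
      Fintype {s : Fin l → ↥W.1 // LinearIndependent K s} := fun W => Fintype.ofFinite _
  rw [← Nat.card_eq_of_bijective _ hbij, Nat.card_eq_fintype_card, Fintype.card_sigma]
  have hfib : ∀ W : {W : Submodule K V // finrank K ↥W = l},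
      Nat.card {s : Fin l → ↥W.1 // LinearIndependent K s} =
        ∏ i : Fin l, (Fintype.card K ^ l - Fintype.card K ^ i.val) := by
    intro W
    rw [card_linearIndependent (by rw [W.2] : l ≤ finrank K ↥W.1), W.2]
  have : ∀ W : {W : Submodule K V // finrank K ↥W = l},
      Fintype.card {s : Fin l → ↥W.1 // LinearIndependent K s} =
        ∏ i : Fin l, (Fintype.card K ^ l - Fintype.card K ^ i.val) := by
    intro W; rw [← Nat.card_eq_fintype_card]; exact hfib W
  rw [Finset.sum_congr rfl (fun W _ => this W), Finset.sum_const, smul_eq_mul,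
    Nat.card_eq_fintype_card, Finset.card_univ]

lemma prod_one_sub_ge (x : ℝ) (hx0 : 0 ≤ x) (hx1 : x ≤ 1) :
    ∀ l : ℕ, 1 ≤ l → 1 - x - x^2 + x^(l+1) ≤ ∏ j ∈ range l, (1 - x^(j+1))
  | 0, h => by omega
  | 1, _ => by norm_num [Finset.prod_range_one]
  | (l+2), _ => by
    have ih := prod_one_sub_ge x hx0 hx1 (l+1) (by omega)
    rw [Finset.prod_range_succ]
    have hy : 0 ≤ x^(l+2) := pow_nonneg hx0 _
    have hyx2 : x^(l+2) ≤ x^2 := pow_le_pow_of_le_one hx0 hx1 (by omega)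
    have h1 : 0 ≤ 1 - x^(l+2) := by
      have : x^(l+2) ≤ 1 := pow_le_one₀ hx0 hx1
      linarith
    have e : x^(l+2+1) = x^(l+2) * x := pow_succ x (l+2)
    have h12 : x^(l+1+1) = x^(l+2) := by norm_num
    calc 1 - x - x^2 + x^(l+2+1) = 1 - x - x^2 + x^(l+2)*x := by rw [e]
      _ ≤ (1 - x - x^2 + x^(l+1+1)) * (1 - x^(l+2)) := by
          rw [h12]; nlinarith [mul_nonneg hy (sub_nonneg.2 hyx2)]
      _ ≤ (∏ j ∈ range (l+1), (1 - x^(j+1))) * (1 - x^(l+2)) :=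
          mul_le_mul_of_nonneg_right ih h1

lemma four_mul_prod_ge (q l : ℕ) (hq : 2 ≤ q) (hl : 0 < l) :
    (q:ℝ)^(l*l) ≤ 4 * ∏ i ∈ range l, ((q:ℝ)^l - (q:ℝ)^i) := by
  set x : ℝ := 1 / q with hx
  have hq2 : (2:ℝ) ≤ (q:ℝ) := by exact_mod_cast hq
  have hq0 : (0:ℝ) < q := by linarith
  have hx0 : 0 ≤ x := by positivity
  have hx12 : x ≤ 1/2 := by
    rw [hx, div_le_div_iff₀ hq0 (by norm_num)]
    linarith
  have hx1 : x ≤ 1 := by linarith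
  have key : ∏ i ∈ range l, ((q:ℝ)^l - (q:ℝ)^i)
      = (q:ℝ)^(l*l) * ∏ j ∈ range l, (1 - x^(j+1)) := by
    rw [← Finset.prod_range_reflect (fun j => 1 - x^(j+1)) l,
      show (q:ℝ)^(l*l) = ∏ _i ∈ range l, (q:ℝ)^l from by
        rw [Finset.prod_const, Finset.card_range, ← pow_mul],
      ← Finset.prod_mul_distrib]
    apply Finset.prod_congr rfl
    intro i hi
    rw [Finset.mem_range] at hi
    have hli : l - 1 - i + 1 = l - i := by omega
    rw [hli, hx]
    have hxe : ((1:ℝ)/q)^(l-i) = (q:ℝ)^i / (q:ℝ)^l := by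
      rw [div_pow, one_pow, eq_div_iff (by positivity : ((q:ℝ)^l) ≠ 0),
        div_mul_eq_mul_div, one_mul, div_eq_iff (by positivity), ← pow_add]
      congr 1
      omega
    rw [hxe]
    field_simp
  rw [key]
  have hp := prod_one_sub_ge x hx0 hx1 l hl
  have hxl : 0 ≤ x^(l+1) := pow_nonneg hx0 _
  have h14 : (1:ℝ)/4 ≤ ∏ j ∈ range l, (1 - x^(j+1)) := by nlinarith
  nlinarith [pow_pos hq0 (l*l), mul_le_mul_of_nonneg_left h14 (le_of_lt (pow_pos hq0 (l*l)))]

lemma grass_lt (K : Type*) [Field K] [Fintype K] (m l : ℕ) (hl : 0 < l) (hlm : l < m) :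
    (Nat.card {W : Submodule K (Fin m → K) // finrank K ↥W = l} : ℝ)
      < 4 * (Fintype.card K : ℝ) ^ (l*(m-l)) := by
  set q := Fintype.card K with hqdef
  have hq2 : 2 ≤ q := Fintype.one_lt_card
  have hq2R : (2:ℝ) ≤ (q:ℝ) := by exact_mod_cast hq2
  have hfr : finrank K (Fin m → K) = m := by
    rw [Module.finrank_fintype_fun_eq_card, Fintype.card_fin]
  have hli := card_linearIndependent (K := K) (V := Fin m → K)
    (k := l) (by rw [hfr]; exact hlm.le)
  rw [grass_count l, hfr] at hli
  have hcast : ∀ (a : ℕ), l ≤ a → ((∏ i : Fin l, (q ^ a - q ^ i.val) : ℕ) : ℝ)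
      = ∏ i ∈ range l, ((q:ℝ)^a - (q:ℝ)^i) := by
    intro a ha
    rw [Fin.prod_univ_eq_prod_range (fun i => q ^ a - q ^ i)]
    push_cast [Nat.cast_prod]
    apply Finset.prod_congr rfl
    intro i hi
    rw [Finset.mem_range] at hi
    rw [Nat.cast_sub (Nat.pow_le_pow_right (by omega) (by omega))]
    push_cast; ring
  set Ar : ℝ := ∏ i ∈ range l, ((q:ℝ)^l - (q:ℝ)^i) with hAr
  set Br : ℝ := ∏ i ∈ range l, ((q:ℝ)^m - (q:ℝ)^i) with hBr
  set G : ℕ := Nat.card {W : Submodule K (Fin m → K) // finrank K ↥W = l} with hG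
  have h1 : (G:ℝ) * Ar = Br := by
    rw [hAr, hBr, ← hcast l le_rfl, ← hcast m hlm.le, ← Nat.cast_mul, ← hli]
  have h2 : Br < (q:ℝ)^(m*l) := by
    have : (q:ℝ)^(m*l) = ∏ _i ∈ range l, (q:ℝ)^m := by
      rw [Finset.prod_const, Finset.card_range, ← pow_mul]
    rw [this, hBr]
    apply Finset.prod_lt_prod_of_nonempty
    · intro i hi
      rw [Finset.mem_range] at hi
      have : (q:ℝ)^i < (q:ℝ)^m := by
        apply pow_lt_pow_right₀ (by linarith) (by omega)
      linarith
    · intro i hi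
      have : (0:ℝ) < (q:ℝ)^i := by positivity
      linarith
    · exact Finset.nonempty_range_iff.mpr (by omega)
  have h3 : (q:ℝ)^(l*l) ≤ 4 * Ar := four_mul_prod_ge q l hq2 hl
  have hArpos : 0 < Ar := by nlinarith [pow_pos (by linarith : (0:ℝ) < (q:ℝ)) (l*l)]
  have hexp : l*(m-l) + l*l = m*l := by
    rw [← Nat.mul_add, Nat.sub_add_cancel hlm.le, Nat.mul_comm]
  have h4 : (G:ℝ) * Ar < (4 * (q:ℝ)^(l*(m-l))) * Ar := by
    calc (G:ℝ)*Ar = Br := h1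
      _ < (q:ℝ)^(m*l) := h2
      _ = (q:ℝ)^(l*(m-l)) * (q:ℝ)^(l*l) := by rw [← pow_add, hexp]
      _ ≤ (q:ℝ)^(l*(m-l)) * (4*Ar) :=
          mul_le_mul_of_nonneg_left h3 (by positivity)
      _ = (4 * (q:ℝ)^(l*(m-l))) * Ar := by ring
  exact lt_of_mul_lt_mul_right h4 hArpos.le

/-- Sum of cardinalities of pairwise disjoint subsets of a finite set. -/
lemma sum_card_le {Ω : Type*} [Finite Ω] {ι : Type*} [Fintype ι] (f : ι → Set Ω) (T : Set Ω)
    (hsub : ∀ i, f i ⊆ T)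
    (hdisj : ∀ i j, i ≠ j → ∀ x, x ∈ f i → x ∈ f j → False) :
    ∑ i, Nat.card (f i) ≤ Nat.card T := by
  classical
  letI : Fintype Ω := Fintype.ofFinite _
  have hcard : ∀ s : Set Ω, Nat.card s = s.toFinset.card := fun s => by
    rw [Nat.card_eq_fintype_card, Set.toFinset_card]
  calc ∑ i, Nat.card (f i) = ∑ i, (f i).toFinset.card := by
        exact Finset.sum_congr rfl fun i _ => hcard _
    _ = (Finset.univ.biUnion (fun i => (f i).toFinset)).card := by
        rw [Finset.card_biUnion]
        intro i _ j _ hij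
        rw [Function.onFun, Finset.disjoint_left]
        intro x hx hx'
        exact hdisj i j hij x (Set.mem_toFinset.mp hx) (Set.mem_toFinset.mp hx')
    _ ≤ T.toFinset.card := by
        apply Finset.card_le_card
        intro x hx
        rw [Finset.mem_biUnion] at hx
        obtain ⟨i, _, hxi⟩ := hx
        exact Set.mem_toFinset.mpr (hsub i (Set.mem_toFinset.mp hxi))
    _ = Nat.card T := (hcard T).symm

end Counting

/-- Sphere packing bound for constant-dimension broadcast subspace codes:
`|M₂| < 4^n q^{n l (m-l)} / T_{n,l}(s₁,|M₁|,⌊(s₂-1)/2⌋)`. -/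
theorem stmt10 (q m n l : ℕ) (hl : 0 < l) (hlm : l < m)
    (K : Type*) [Field K] [Fintype K] (hq : Fintype.card K = q)
    (M₁ M₂ : Type*) [Finite M₁] [Finite M₂]
    (hM₁ : 2 ≤ Nat.card M₁) (hM₂ : 2 ≤ Nat.card M₂)
    (γ : M₁ × M₂ → (Fin n → Submodule K (Fin m → K))) (hγ : Function.Injective γ)
    (hdim : ∀ p i, finrank K ↥(γ p i) = l)
    (s₁ s₂ : ℕ) (hs : s₁ < s₂)
    (hs₁ : IsLeast {d | ∃ p p' : M₁ × M₂, p.1 ≠ p'.1 ∧ d = dSn (γ p) (γ p')} s₁)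
    (hs₂ : IsLeast {d | ∃ p p' : M₁ × M₂, p.2 ≠ p'.2 ∧ d = dSn (γ p) (γ p')} s₂) :
    (Nat.card M₂ : ℝ) <
      (4 : ℝ) ^ n * (q : ℝ) ^ (n * (l * (m - l))) /
        (Tnl K m n l s₁ (Nat.card M₁) ((s₂ - 1) / 2) : ℝ) := by
  classical
  haveI : Finite (Submodule K (Fin m → K)) :=
    Finite.of_injective _ (SetLike.coe_injective (A := Submodule K (Fin m → K)))
  haveI : Nonempty M₁ := (Nat.card_pos_iff.mp (by omega)).1
  haveI : Nonempty M₂ := (Nat.card_pos_iff.mp (by omega)).1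
  letI : Fintype M₂ := Fintype.ofFinite _
  set r : ℕ := (s₂ - 1) / 2 with hr
  set N : ℕ := Nat.card M₁ with hN
  set T : ℕ := Tnl K m n l s₁ N r with hT
  set TS : Set ℕ := {t | ∃ S : Set (Fin n → Submodule K (Fin m → K)),
    (∀ X ∈ S, ∀ i, finrank K ↥(X i) = l) ∧ Nat.card ↥S = N ∧
    (∀ X ∈ S, ∀ Y ∈ S, X ≠ Y → s₁ ≤ dSn X Y) ∧ t = Nat.card ↥(nbhdG l r S)} with hTS
  -- positivity of s₂
  have hs₂pos : 0 < s₂ := by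
    obtain ⟨p, p', hpp, hd⟩ := hs₁.1
    have hne : γ p ≠ γ p' := fun h => hpp (congrArg Prod.fst (hγ h))
    have := dSn_pos hne
    have := hs₁.2
    omega
  -- the code sets
  set Sm : M₂ → Set (Fin n → Submodule K (Fin m → K)) :=
    fun m₂ => Set.range (fun m₁ => γ (m₁, m₂)) with hSm
  have hmemT : ∀ m₂ : M₂, Nat.card ↥(nbhdG l r (Sm m₂)) ∈ TS := by
    intro m₂
    refine ⟨Sm m₂, ?_, ?_, ?_, rfl⟩
    · rintro X ⟨m₁, rfl⟩ i
      exact hdim _ i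
    · show Nat.card ↥(Set.range fun m₁ => γ (m₁, m₂)) = N
      have hinj : Function.Injective (fun m₁ => γ (m₁, m₂)) := by
        intro a b hab
        have := hγ hab
        exact ((Prod.mk.injEq _ _ _ _).mp this).1
      exact Nat.card_congr (Equiv.ofInjective _ hinj).symm
    · rintro X ⟨a, rfl⟩ Y ⟨b, rfl⟩ hXY
      have hab : a ≠ b := fun h => hXY (by rw [h])
      exact hs₁.2 ⟨(a, m₂), (b, m₂), hab, rfl⟩
  have hTSne : TS.Nonempty := ⟨_, hmemT Classical.ofNonempty⟩
  have hTmem : T ∈ TS := Nat.sInf_mem hTSne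
  -- T is at least 2
  have hT2 : 2 ≤ T := by
    obtain ⟨S, hdims, hcard, _, ht⟩ := hTmem
    have hsub : S ⊆ nbhdG l r S := by
      intro X hX
      exact ⟨hdims X hX, X, hX, by rw [dSn_self]; exact Nat.zero_le _⟩
    have := Nat.card_mono (Set.toFinite _) hsub
    omega
  have hTle : ∀ m₂ : M₂, T ≤ Nat.card ↥(nbhdG l r (Sm m₂)) :=
    fun m₂ => Nat.sInf_le (hmemT m₂)
  -- disjointness
  have hdisj : ∀ m₂ m₂' : M₂, m₂ ≠ m₂' → ∀ U,
      U ∈ nbhdG l r (Sm m₂) → U ∈ nbhdG l r (Sm m₂') → False := by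
    rintro m₂ m₂' hne U ⟨_, C, ⟨a, rfl⟩, hC⟩ ⟨_, C', ⟨b, rfl⟩, hC'⟩
    have hC2 : dSn U (γ (a, m₂)) ≤ r := hC
    have hC2' : dSn U (γ (b, m₂')) ≤ r := hC'
    have htri : dSn (γ (a, m₂)) (γ (b, m₂')) ≤ r + r := by
      calc dSn (γ (a, m₂)) (γ (b, m₂'))
          ≤ dSn (γ (a, m₂)) U + dSn U (γ (b, m₂')) := dSn_triangle _ _ _
        _ ≤ r + r := by rw [dSn_comm (γ (a, m₂)) U]; omega
    have hge : s₂ ≤ dSn (γ (a, m₂)) (γ (b, m₂')) :=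
      hs₂.2 ⟨(a, m₂), (b, m₂'), hne, rfl⟩
    omega
  -- n is positive
  have hn : 0 < n := by
    rcases Nat.eq_zero_or_pos n with rfl | hn
    · exfalso
      have h1 : Nat.card (M₁ × M₂) ≤ Nat.card (Fin 0 → Submodule K (Fin m → K)) :=
        Nat.card_le_card_of_injective γ hγ
      have hone : Nat.card (Fin 0 → Submodule K (Fin m → K)) = 1 := by
        rw [Nat.card_pi]
        simp
      rw [Nat.card_prod, hone] at h1
      have h2 : 2*2 ≤ Nat.card M₁ * Nat.card M₂ := Nat.mul_le_mul (hN ▸ hM₁) hM₂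
      omega
    · exact hn
  -- the big set of constant-dimension tuples
  set GT : Set (Fin n → Submodule K (Fin m → K)) :=
    {U | ∀ i, finrank K ↥(U i) = l} with hGT
  set G : ℕ := Nat.card {W : Submodule K (Fin m → K) // finrank K ↥W = l} with hG
  have hGTcard : Nat.card ↥GT = G ^ n := by
    have h0 : Nat.card ↥GT =
        Nat.card {U : Fin n → Submodule K (Fin m → K) // ∀ i, finrank K ↥(U i) = l} := rfl
    rw [h0, Nat.card_congr
      (Equiv.subtypePiEquivPi (p := fun (_i : Fin n) (W : Submodule K (Fin m → K)) =>
        finrank K ↥W = l)),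
      Nat.card_pi, Finset.prod_const, Finset.card_univ, Fintype.card_fin]
  -- summing up
  have hsum : Nat.card M₂ * T ≤ G ^ n := by
    have h1 : ∑ m₂ : M₂, T ≤ ∑ m₂ : M₂, Nat.card ↥(nbhdG l r (Sm m₂)) :=
      Finset.sum_le_sum fun m₂ _ => hTle m₂
    have h2 : ∑ m₂ : M₂, Nat.card ↥(nbhdG l r (Sm m₂)) ≤ Nat.card ↥GT := by
      apply sum_card_le _ _ (fun m₂ U hU => hU.1) hdisj
    rw [Finset.sum_const, Finset.card_univ, smul_eq_mul] at h1
    rw [← Nat.card_eq_fintype_card] at h1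
    omega
  -- pass to the reals
  have hGlt : (G:ℝ) < 4 * (q:ℝ) ^ (l * (m - l)) := by
    have := grass_lt K m l hl hlm
    rw [hq] at this
    exact this
  have hpow : ((G:ℝ))^n < (4 * (q:ℝ) ^ (l * (m - l)))^n :=
    pow_lt_pow_left₀ hGlt (by positivity) (by omega)
  have hTpos : (0:ℝ) < (T:ℝ) := by exact_mod_cast (by omega : 0 < T)
  rw [lt_div_iff₀ hTpos]
  have hfin : (Nat.card M₂ : ℝ) * T ≤ (G:ℝ)^n := by
    have := hsum
    exact_mod_cast (by exact_mod_cast this : ((Nat.card M₂ * T : ℕ) : ℝ) ≤ ((G^n : ℕ) : ℝ))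
  calc (Nat.card M₂ : ℝ) * T ≤ (G:ℝ)^n := hfin
    _ < (4 * (q:ℝ) ^ (l * (m - l)))^n := hpow
    _ = (4:ℝ)^n * (q:ℝ) ^ (n * (l * (m - l))) := by
        rw [mul_pow, ← pow_mul, Nat.mul_comm]
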